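/- Let g and h be invertible real symmetric 4×4 matrices whose area metrics coincide: g a c · g d b − g a d · g c b = h a c · h d b − h a d · h c b for all indices a, b, c, d. Then h = g or h = −g. (The area metric contains the full information about the metric up to a sign.) -/
import Mathlib

lemma area_contract_aux (K M : Matrix (Fin 4) (Fin 4) ℝ) (a d : Fin 4) :
    ∑ c : Fin 4, ∑ b : Fin 4, K c b * (M a c * M b d - M a d * M b c)
      = (M * K * M) a d - M a d * (K * M).trace := by
  have h1 : (M * K * M) a d = ∑ c : Fin 4, M a c * ∑ b : Fin 4, K c b * M b d := by
    rw [Matrix.mul_assoc]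
    simp [Matrix.mul_apply, Finset.mul_sum]
  have h2 : (K * M).trace = ∑ c : Fin 4, ∑ b : Fin 4, K c b * M b c := by
    simp [Matrix.trace, Matrix.mul_apply, Matrix.diag]
  rw [h1, h2, Finset.mul_sum, ← Finset.sum_sub_distrib]
  refine Finset.sum_congr rfl fun c _ => ?_
  rw [Finset.mul_sum, Finset.mul_sum, ← Finset.sum_sub_distrib]
  refine Finset.sum_congr rfl fun b _ => ?_
  ring

/-- Two invertible real symmetric 4×4 matrices with the same
area metric agree up to an overall sign. -/
theorem area_metric_determines_metric_up_to_sign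
    (g h : Matrix (Fin 4) (Fin 4) ℝ)
    (hgsymm : g.IsSymm) (hhsymm : h.IsSymm)
    (hginv : IsUnit g.det) (hhinv : IsUnit h.det)
    (harea : ∀ a b c d : Fin 4,
      g a c * g d b - g a d * g c b = h a c * h d b - h a d * h c b) :
    h = g ∨ h = -g := by
  have hgmul : g * g⁻¹ = 1 := Matrix.mul_nonsing_inv g hginv
  have hgmul' : g⁻¹ * g = 1 := Matrix.nonsing_inv_mul g hginv
  have hhmul : h * h⁻¹ = 1 := Matrix.mul_nonsing_inv h hhinv
  have hhmul' : h⁻¹ * h = 1 := Matrix.nonsing_inv_mul h hhinv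
  -- symmetric form of the area equality
  have harea' : ∀ a b c d : Fin 4,
      g a c * g b d - g a d * g b c = h a c * h b d - h a d * h b c := by
    intro a b c d
    have hg1 : g d b = g b d := hgsymm.apply b d
    have hg2 : g c b = g b c := hgsymm.apply b c
    have hh1 : h d b = h b d := hhsymm.apply b d
    have hh2 : h c b = h b c := hhsymm.apply b c
    have := harea a b c d
    rw [hg1, hg2, hh1, hh2] at this
    exact this
  set t : ℝ := (g⁻¹ * h).trace with ht
  set s : ℝ := (h⁻¹ * g).trace with hs
  -- key1 : h * g⁻¹ * h = t • h - 3 • g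
  have key1 : h * g⁻¹ * h = t • h - (3 : ℝ) • g := by
    ext a d
    have e : ∑ c : Fin 4, ∑ b : Fin 4, g⁻¹ c b * (g a c * g b d - g a d * g b c)
        = ∑ c : Fin 4, ∑ b : Fin 4, g⁻¹ c b * (h a c * h b d - h a d * h b c) := by
      refine Finset.sum_congr rfl fun c _ => Finset.sum_congr rfl fun b _ => ?_
      rw [harea' a b c d]
    rw [area_contract_aux, area_contract_aux] at e
    rw [hgmul, Matrix.one_mul, hgmul'] at e
    simp only [Matrix.trace_one] at e
    have : g a d - g a d * 4 = (h * g⁻¹ * h) a d - h a d * t := e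
    simp only [Matrix.sub_apply, Matrix.smul_apply, smul_eq_mul]
    linarith [this]
  -- key2 : g * h⁻¹ * g = s • g - 3 • h
  have key2 : g * h⁻¹ * g = s • g - (3 : ℝ) • h := by
    ext a d
    have e : ∑ c : Fin 4, ∑ b : Fin 4, h⁻¹ c b * (g a c * g b d - g a d * g b c)
        = ∑ c : Fin 4, ∑ b : Fin 4, h⁻¹ c b * (h a c * h b d - h a d * h b c) := by
      refine Finset.sum_congr rfl fun c _ => Finset.sum_congr rfl fun b _ => ?_
      rw [harea' a b c d]
    rw [area_contract_aux, area_contract_aux] at e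
    rw [hhmul, Matrix.one_mul, hhmul'] at e
    simp only [Matrix.trace_one] at e
    have : (g * h⁻¹ * g) a d - g a d * s = h a d - h a d * 4 := e
    simp only [Matrix.sub_apply, Matrix.smul_apply, smul_eq_mul]
    linarith [this]
  set A : Matrix (Fin 4) (Fin 4) ℝ := g⁻¹ * h with hA
  -- eA : A * A = t • A - 3 • 1
  have eA : A * A = t • A - (3 : ℝ) • 1 := by
    have : g⁻¹ * (h * g⁻¹ * h) = g⁻¹ * (t • h - (3 : ℝ) • g) := by rw [key1]
    calc A * A = g⁻¹ * (h * g⁻¹ * h) := by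
          rw [hA]; noncomm_ring
      _ = g⁻¹ * (t • h - (3 : ℝ) • g) := this
      _ = t • A - (3 : ℝ) • 1 := by
          rw [Matrix.mul_sub, Matrix.mul_smul, Matrix.mul_smul, hgmul', hA]
  -- eB : h⁻¹ * g = s • 1 - 3 • A
  have eB : h⁻¹ * g = s • 1 - (3 : ℝ) • A := by
    have e : g⁻¹ * (g * h⁻¹ * g) = g⁻¹ * (s • g - (3 : ℝ) • h) := by rw [key2]
    have l : g⁻¹ * (g * h⁻¹ * g) = h⁻¹ * g := by
      rw [Matrix.mul_assoc g (h⁻¹) g, ← Matrix.mul_assoc, hgmul', Matrix.one_mul]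
    have r : g⁻¹ * (s • g - (3 : ℝ) • h) = s • 1 - (3 : ℝ) • A := by
      rw [Matrix.mul_sub, Matrix.mul_smul, Matrix.mul_smul, hgmul', hA]
    rw [l, r] at e
    exact e
  -- eAB : A * (h⁻¹ * g) = 1
  have eAB : A * (h⁻¹ * g) = 1 := by
    rw [hA, Matrix.mul_assoc, ← Matrix.mul_assoc h h⁻¹ g, hhmul, Matrix.one_mul, hgmul']
  -- combine
  have comb : (s - 3 * t) • A = (-8 : ℝ) • (1 : Matrix (Fin 4) (Fin 4) ℝ) := by
    have h1 : (1 : Matrix (Fin 4) (Fin 4) ℝ) = A * (s • 1 - (3 : ℝ) • A) := by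
      rw [← eB, eAB]
    rw [Matrix.mul_sub, Matrix.mul_smul, Matrix.mul_smul, Matrix.mul_one, eA] at h1
    ext i j
    have e2 := congrArg (fun M : Matrix (Fin 4) (Fin 4) ℝ => M i j) h1
    simp only [Matrix.smul_apply, Matrix.sub_apply, smul_eq_mul] at e2
    simp only [Matrix.smul_apply, smul_eq_mul]
    nlinarith [e2]
  have hu : s - 3 * t ≠ 0 := by
    intro h0
    rw [h0, zero_smul] at comb
    have := congrArg (fun M : Matrix (Fin 4) (Fin 4) ℝ => M 0 0) comb
    simp [Matrix.one_apply] at this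
  -- A is scalar
  set c : ℝ := (-8) / (s - 3 * t) with hc
  have hAc : A = c • (1 : Matrix (Fin 4) (Fin 4) ℝ) := by
    have := congrArg (fun M : Matrix (Fin 4) (Fin 4) ℝ => (s - 3 * t)⁻¹ • M) comb
    simp only [smul_smul] at this
    rw [inv_mul_cancel₀ hu, one_smul] at this
    rw [this, hc, div_eq_inv_mul]
  have hhg : h = c • g := by
    have : g * A = h := by rw [hA, ← Matrix.mul_assoc, hgmul, Matrix.one_mul]
    rw [← this, hAc, Matrix.mul_smul, Matrix.mul_one]
  -- t = 4c
  have ht4 : t = 4 * c := by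
    rw [ht, hAc]
    simp [Matrix.trace_smul, Matrix.trace_one]
    ring
  -- c^2 = 1
  have hc2 : c ^ 2 = 1 := by
    have e := eA
    rw [hAc] at e
    have e0 := congrArg (fun M : Matrix (Fin 4) (Fin 4) ℝ => M 0 0) e
    simp only [Matrix.smul_mul, Matrix.mul_smul, Matrix.one_mul, Matrix.smul_apply,
      Matrix.sub_apply, Matrix.one_apply_eq, smul_eq_mul] at e0
    rw [ht4] at e0
    nlinarith [e0]
  have : c = 1 ∨ c = -1 := by
    have : (c - 1) * (c + 1) = 0 := by nlinarith [hc2]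
    rcases mul_eq_zero.mp this with h1 | h1
    · left; linarith
    · right; linarith
  rcases this with h1 | h1
  · left; rw [hhg, h1, one_smul]
  · right; rw [hhg, h1, neg_smul, one_smul]
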